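/- Let X, Y be vectors in ℝ^n and X', Y' vectors in ℝ^2, all with nonnegative entries. Define X ⪯ₛ Y to mean: for every k, the sum of the k largest entries of X is at most the sum of the k largest entries of Y. If X ⪯ₛ Y and X' ⪯ₛ Y', then the concatenation (X, X') ⪯ₛ (Y, Y'). -/

import Mathlib

/-- The sum of the `k` largest entries of a finite real vector, expressed as the
supremum over all subsets of cardinality `k` of the sum of the entries on that subset. -/
noncomputable def topSum {n : ℕ} (X : Fin n → ℝ) (k : ℕ) : ℝ :=
  sSup {v : ℝ | ∃ s : Finset (Fin n), s.card = k ∧ v = ∑ i ∈ s, X i}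

lemma topSum_set_finite {n : ℕ} (X : Fin n → ℝ) (k : ℕ) :
    {v : ℝ | ∃ s : Finset (Fin n), s.card = k ∧ v = ∑ i ∈ s, X i}.Finite := by
  have h : {v : ℝ | ∃ s : Finset (Fin n), s.card = k ∧ v = ∑ i ∈ s, X i} ⊆
      (fun s : Finset (Fin n) => ∑ i ∈ s, X i) '' Set.univ := by
    rintro v ⟨s, _, rfl⟩; exact ⟨s, trivial, rfl⟩
  exact (Set.finite_univ.image _).subset h

lemma le_topSum {n : ℕ} (X : Fin n → ℝ) {k : ℕ} (s : Finset (Fin n)) (hs : s.card = k) :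
    ∑ i ∈ s, X i ≤ topSum X k :=
  le_csSup (topSum_set_finite X k).bddAbove ⟨s, hs, rfl⟩

lemma topSum_exists {n : ℕ} (X : Fin n → ℝ) {k : ℕ} (hk : k ≤ n) :
    ∃ s : Finset (Fin n), s.card = k ∧ topSum X k = ∑ i ∈ s, X i := by
  obtain ⟨t, -, ht⟩ := Finset.exists_subset_card_eq (s := (Finset.univ : Finset (Fin n))) (n := k)
    (by simpa using hk)
  have hne : {v : ℝ | ∃ s : Finset (Fin n), s.card = k ∧ v = ∑ i ∈ s, X i}.Nonempty :=
    ⟨_, t, ht, rfl⟩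
  exact hne.csSup_mem (topSum_set_finite X k)

lemma topSum_of_gt {n : ℕ} (X : Fin n → ℝ) {k : ℕ} (hk : n < k) : topSum X k = 0 := by
  have : {v : ℝ | ∃ s : Finset (Fin n), s.card = k ∧ v = ∑ i ∈ s, X i} = ∅ := by
    ext v
    simp only [Set.mem_setOf_eq, Set.mem_empty_iff_false, iff_false, not_exists]
    rintro s ⟨hs, -⟩
    have := s.card_le_univ
    simp [hs] at this
    omega
  rw [topSum, this, Real.sSup_empty]

/-- If `X ⪯ₛ Y` (every `k`-largest-entries prefix sum of `X` is at most that of `Y`)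
and `X' ⪯ₛ Y'` for two-dimensional `X'`, `Y'`, then the concatenations satisfy
`(X, X') ⪯ₛ (Y, Y')`. -/
theorem concat_prefix_dominance (n : ℕ) (X Y : Fin n → ℝ) (X' Y' : Fin 2 → ℝ)
    (hX : ∀ i, 0 ≤ X i) (hY : ∀ i, 0 ≤ Y i) (hX' : ∀ i, 0 ≤ X' i) (hY' : ∀ i, 0 ≤ Y' i)
    (h1 : ∀ k, topSum X k ≤ topSum Y k)
    (h2 : ∀ k, topSum X' k ≤ topSum Y' k) :
    ∀ k, topSum (Fin.append X X') k ≤ topSum (Fin.append Y Y') k := by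
  intro k
  by_cases hk : k ≤ n + 2
  · obtain ⟨s, hs, hXs⟩ := topSum_exists (Fin.append X X') hk
    set e := (finSumFinEquiv : Fin n ⊕ Fin 2 ≃ Fin (n + 2))
    set t : Finset (Fin n ⊕ Fin 2) := s.map e.symm.toEmbedding with ht
    have hsplit : ∀ (Z : Fin n → ℝ) (Z' : Fin 2 → ℝ),
        ∑ i ∈ s, Fin.append Z Z' i = ∑ i ∈ t.toLeft, Z i + ∑ i ∈ t.toRight, Z' i := by
      intro Z Z'
      have : ∑ j ∈ t, Fin.append Z Z' (e j) = ∑ i ∈ s, Fin.append Z Z' i := by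
        rw [ht, Finset.sum_map]
        simp
      rw [← this, ← t.toLeft_disjSum_toRight, Finset.sum_disjSum]
      simp [e, Fin.append_left, Fin.append_right,
        t.toLeft_disjSum_toRight]
    have hcards : t.toLeft.card + t.toRight.card = k := by
      rw [Finset.card_toLeft_add_card_toRight, ht, Finset.card_map, hs]
    have ha : t.toLeft.card ≤ n := by simpa using t.toLeft.card_le_univ
    have hb : t.toRight.card ≤ 2 := by simpa using t.toRight.card_le_univ
    -- upper bound for X side
    have hx : topSum (Fin.append X X') k ≤
        topSum X t.toLeft.card + topSum X' t.toRight.card := by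
      rw [hXs, hsplit X X']
      gcongr
      · exact le_topSum X _ rfl
      · exact le_topSum X' _ rfl
    -- lower bound for Y side
    obtain ⟨u₁, hu₁, hYu₁⟩ := topSum_exists Y ha
    obtain ⟨u₂, hu₂, hYu₂⟩ := topSum_exists Y' hb
    have hy : topSum Y t.toLeft.card + topSum Y' t.toRight.card ≤
        topSum (Fin.append Y Y') k := by
      rw [hYu₁, hYu₂]
      have hcard : ((u₁.disjSum u₂).map e.toEmbedding).card = k := by
        simp [Finset.card_disjSum, hu₁, hu₂, hcards]
      have hsum : ∑ i ∈ (u₁.disjSum u₂).map e.toEmbedding, Fin.append Y Y' i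
          = ∑ i ∈ u₁, Y i + ∑ i ∈ u₂, Y' i := by
        rw [Finset.sum_map, Finset.sum_disjSum]
        simp [e, Fin.append_left, Fin.append_right]
      calc ∑ i ∈ u₁, Y i + ∑ i ∈ u₂, Y' i
          = ∑ i ∈ (u₁.disjSum u₂).map e.toEmbedding, Fin.append Y Y' i := hsum.symm
        _ ≤ _ := le_topSum _ _ hcard
    calc topSum (Fin.append X X') k
        ≤ topSum X t.toLeft.card + topSum X' t.toRight.card := hx
      _ ≤ topSum Y t.toLeft.card + topSum Y' t.toRight.card := add_le_add (h1 _) (h2 _)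
      _ ≤ topSum (Fin.append Y Y') k := hy
  · rw [topSum_of_gt _ (by omega), topSum_of_gt _ (by omega)]
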